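/- Let D ≥ 1 and let l : ℝ^D → ℝ be differentiable everywhere with gradient ∇l that is L-Lipschitz: ‖∇l(a) − ∇l(b)‖₂ ≤ L‖a − b‖₂ for all a, b ∈ ℝ^D. Fix δ ∈ ℝ^D, ε ≥ 0, γ > 0, and let z be a random vector in ℝ^D whose coordinates are independent standard normal random variables. Define the random update δ⁺ = δ − ε·sign(∇l(δ) + γz) (sign applied componentwise). Then E[l(δ⁺)] ≤ l(δ) − ε·Σ_{i=1}^{D} |∂_i l(δ)|·(2Φ(|∂_i l(δ)|/γ) − 1) + (L·D·ε²)/2. -/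

import Mathlib

open MeasureTheory ProbabilityTheory

noncomputable def Phi (x : ℝ) : ℝ := ((gaussianReal 0 1) (Set.Iic x)).toReal


lemma gauss_singleton (c : ℝ) : gaussianReal 0 1 {c} = 0 :=
  gaussianReal_absolutelyContinuous 0 one_ne_zero (measure_singleton c)

lemma gauss_Iio (c : ℝ) : (gaussianReal 0 1 (Set.Iio c)).toReal = Phi c := by
  have h : (Set.Iic c) = Set.Iio c ∪ {c} := by
    ext t; simp [le_iff_lt_or_eq]
  rw [Phi, h, measure_union (by simp) (measurableSet_singleton c), gauss_singleton, add_zero]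

lemma gauss_Ioi (c : ℝ) : (gaussianReal 0 1 (Set.Ioi c)).toReal = 1 - Phi c := by
  have : Set.Ioi c = (Set.Iic c)ᶜ := by simp
  rw [this, prob_compl_eq_one_sub measurableSet_Iic, Phi,
    ENNReal.toReal_sub_of_le prob_le_one (by simp), ENNReal.toReal_one]

lemma Phi_neg (x : ℝ) : Phi (-x) = 1 - Phi x := by
  have hmap : (gaussianReal 0 1).map ((-1 : ℝ) * ·) = gaussianReal 0 1 := by
    have := gaussianReal_map_const_mul (μ := 0) (v := 1) (-1 : ℝ)
    simpa using this
  have h1 : gaussianReal 0 1 (Set.Iic (-x)) = gaussianReal 0 1 (Set.Ici x) := by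
    conv_lhs => rw [← hmap]
    rw [Measure.map_apply (by fun_prop) measurableSet_Iic]
    congr 1
    ext t
    simp only [Set.mem_preimage, Set.mem_Iic, Set.mem_Ici]
    constructor <;> intro h <;> nlinarith
  have h2 : Set.Ici x = Set.Ioi x ∪ {x} := by
    ext t; simp [le_iff_lt_or_eq, eq_comm, or_comm]
  rw [Phi, h1, h2, measure_union (by simp) (measurableSet_singleton x), gauss_singleton,
    add_zero, gauss_Ioi]

lemma sign_eq_indicator (a γ : ℝ) (hγ : 0 < γ) (t : ℝ) :
    Real.sign (a + γ * t) = (Set.Ioi (-a/γ)).indicator (fun _ => (1:ℝ)) t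
      - (Set.Iio (-a/γ)).indicator (fun _ => (1:ℝ)) t := by
  rcases lt_trichotomy t (-a/γ) with h | h | h
  · have h1 : a + γ * t < 0 := by rw [lt_div_iff₀ hγ] at h; nlinarith
    rw [Real.sign_of_neg h1, Set.indicator_of_notMem (by simpa using h.le),
      Set.indicator_of_mem (by simpa using h)]
    norm_num
  · subst h
    have h1 : a + γ * (-a/γ) = 0 := by field_simp; ring
    rw [h1, Real.sign_zero, Set.indicator_of_notMem (by simp), Set.indicator_of_notMem (by simp)]
    norm_num
  · have h1 : 0 < a + γ * t := by rw [div_lt_iff₀ hγ] at h; nlinarith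
    rw [Real.sign_of_pos h1, Set.indicator_of_mem (by simpa using h),
      Set.indicator_of_notMem (by simpa using h.le)]
    norm_num

lemma sign_integrable (a γ : ℝ) (hγ : 0 < γ) :
    Integrable (fun t => Real.sign (a + γ * t)) (gaussianReal 0 1) := by
  have := funext (sign_eq_indicator a γ hγ)
  rw [this]
  exact ((integrable_const (1:ℝ)).indicator measurableSet_Ioi).sub
    ((integrable_const (1:ℝ)).indicator measurableSet_Iio)

lemma sign_integral (a γ : ℝ) (hγ : 0 < γ) :
    ∫ t, Real.sign (a + γ * t) ∂(gaussianReal 0 1) = 2 * Phi (a/γ) - 1 := by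
  have := funext (sign_eq_indicator a γ hγ)
  rw [this, integral_sub ((integrable_const (1:ℝ)).indicator measurableSet_Ioi)
    ((integrable_const (1:ℝ)).indicator measurableSet_Iio),
    integral_indicator_const _ measurableSet_Ioi, integral_indicator_const _ measurableSet_Iio]
  simp only [smul_eq_mul, mul_one]
  rw [measureReal_def, measureReal_def, gauss_Ioi, gauss_Iio]
  have : -a/γ = -(a/γ) := by ring
  rw [this, Phi_neg]
  ring

lemma abs_form (a γ : ℝ) (hγ : 0 < γ) :
    a * (2 * Phi (a/γ) - 1) = |a| * (2 * Phi (|a|/γ) - 1) := by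
  rcases le_or_gt 0 a with h | h
  · rw [abs_of_nonneg h]
  · rw [abs_of_neg h]
    have : -a / γ = -(a/γ) := by ring
    rw [this, Phi_neg]
    ring

lemma eval_integral {D : ℕ} (i : Fin D) (f : ℝ → ℝ) :
    ∫ z : Fin D → ℝ, f (z i) ∂(Measure.pi fun _ => gaussianReal 0 1)
      = ∫ t, f t ∂(gaussianReal 0 1) := by
  letI : MeasureSpace ℝ := ⟨gaussianReal 0 1⟩
  haveI : IsProbabilityMeasure (ℙ : Measure ℝ) :=
    inferInstanceAs (IsProbabilityMeasure (gaussianReal 0 1))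
  haveI : SigmaFinite (ℙ : Measure ℝ) := inferInstance
  have h := MeasureTheory.integral_fintype_prod_eq_prod (𝕜 := ℝ) (ι := Fin D)
      (E := fun _ => ℝ) (μ := fun _ => (ℙ : Measure ℝ)) (fun j t => if j = i then f t else 1)
  simp only [Finset.prod_ite_eq', Finset.mem_univ, if_true] at h
  rw [Finset.prod_eq_single i (fun j _ hj => by simp [hj]) (by simp)] at h
  simp only [if_true, if_pos rfl] at h
  exact h

lemma measurable_rsign : Measurable Real.sign := by
  unfold Real.sign
  exact Measurable.ite (measurableSet_lt measurable_id measurable_const) measurable_const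
    (Measurable.ite (measurableSet_lt measurable_const measurable_id)
      measurable_const measurable_const)

section Descent
variable {E : Type*} [NormedAddCommGroup E] [InnerProductSpace ℝ E] [CompleteSpace E]

local notation "⟪" x ", " y "⟫" => @inner ℝ _ _ x y

lemma deriv_along (f : E → ℝ) (hf : Differentiable ℝ f) (x v : E) (t : ℝ) :
    HasDerivAt (fun s : ℝ => f (x + s • v)) ⟪gradient f (x + t • v), v⟫ t := by
  have hc : HasDerivAt (fun s : ℝ => x + s • v) v t := by
    simpa using ((hasDerivAt_id t).smul_const v).const_add x
  have hf' : HasFDerivAt f (fderiv ℝ f (x + t • v)) (x + t • v) :=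
    (hf (x + t • v)).hasFDerivAt
  have := hf'.comp_hasDerivAt t hc
  have he : ⟪gradient f (x + t • v), v⟫ = fderiv ℝ f (x + t • v) v := by
    rw [gradient]; exact InnerProductSpace.toDual_symm_apply
  rw [he]
  exact this

lemma descent (f : E → ℝ) (hf : Differentiable ℝ f) (L : ℝ) (hL0 : 0 ≤ L)
    (hL : ∀ a b, ‖gradient f a - gradient f b‖ ≤ L * ‖a - b‖) (x v : E) :
    f (x + v) ≤ f x + ⟪gradient f x, v⟫ + L / 2 * ‖v‖ ^ 2 := by
  have hgc : Continuous fun p : E => gradient f p := by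
    apply LipschitzWith.continuous (K := L.toNNReal)
    apply LipschitzWith.of_dist_le_mul
    intro a b
    rw [dist_eq_norm, dist_eq_norm]
    calc ‖gradient f a - gradient f b‖ ≤ L * ‖a - b‖ := hL a b
      _ = L.toNNReal * ‖a - b‖ := by rw [Real.coe_toNNReal L hL0]
  have hderiv : ∀ t ∈ Set.uIcc (0:ℝ) 1,
      HasDerivAt (fun s : ℝ => f (x + s • v)) ⟪gradient f (x + t • v), v⟫ t :=
    fun t _ => deriv_along f hf x v t
  have hcont : Continuous fun t : ℝ => ⟪gradient f (x + t • v), v⟫ := by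
    apply Continuous.inner (hgc.comp (by continuity)) continuous_const
  have hint : IntervalIntegrable (fun t : ℝ => ⟪gradient f (x + t • v), v⟫)
      volume 0 1 := hcont.intervalIntegrable 0 1
  have key : f (x + v) - f x = ∫ t in (0:ℝ)..1, ⟪gradient f (x + t • v), v⟫ := by
    have := intervalIntegral.integral_eq_sub_of_hasDerivAt hderiv hint
    rw [this]; simp
  have hmono : (∫ t in (0:ℝ)..1, ⟪gradient f (x + t • v), v⟫)
      ≤ ∫ t in (0:ℝ)..1, (⟪gradient f x, v⟫ + L * t * ‖v‖ ^ 2) := by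
    apply intervalIntegral.integral_mono_on (by norm_num) hint
    · exact (continuous_const.add (by continuity)).intervalIntegrable 0 1
    · intro t ht
      have h1 : ⟪gradient f (x + t • v), v⟫ - ⟪gradient f x, v⟫
          = ⟪gradient f (x + t • v) - gradient f x, v⟫ := by
        rw [inner_sub_left]
      have h2 : ⟪gradient f (x + t • v) - gradient f x, v⟫ ≤ L * t * ‖v‖ ^ 2 := by
        calc ⟪gradient f (x + t • v) - gradient f x, v⟫
            ≤ ‖gradient f (x + t • v) - gradient f x‖ * ‖v‖ := real_inner_le_norm _ _
          _ ≤ (L * ‖x + t • v - x‖) * ‖v‖ := by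
              apply mul_le_mul_of_nonneg_right (hL _ _) (norm_nonneg v)
          _ = L * (|t| * ‖v‖) * ‖v‖ := by rw [add_sub_cancel_left, norm_smul]; rfl
          _ = L * |t| * ‖v‖ ^ 2 := by ring
          _ = L * t * ‖v‖ ^ 2 := by rw [abs_of_nonneg ht.1]
      linarith
  have hR : (∫ t in (0:ℝ)..1, (⟪gradient f x, v⟫ + L * t * ‖v‖ ^ 2))
      = ⟪gradient f x, v⟫ + L / 2 * ‖v‖ ^ 2 := by
    rw [intervalIntegral.integral_add (intervalIntegrable_const)
      (by apply Continuous.intervalIntegrable; continuity)]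
    simp only [intervalIntegral.integral_const, smul_eq_mul, mul_one, sub_zero]
    have : (∫ t in (0:ℝ)..1, L * t * ‖v‖ ^ 2)
        = (L * ‖v‖ ^ 2) * ∫ t in (0:ℝ)..1, t := by
      rw [← intervalIntegral.integral_const_mul]
      congr 1; ext t; ring
    rw [this, integral_id]
    ring
  rw [hR] at hmono
  linarith [key, hmono]

end Descent

/-- expected one-step progress: if `l` is differentiable with `L`-Lipschitz
gradient, `ε ≥ 0`, `γ > 0`, and `z` has i.i.d. standard normal coordinates, then for the
random update `δ⁺ = δ − ε·sign(∇l(δ) + γz)`,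
`E[l(δ⁺)] ≤ l(δ) − ε Σᵢ |∂ᵢl(δ)| (2Φ(|∂ᵢl(δ)|/γ) − 1) + L D ε² / 2`. -/
theorem stmt7 (D : ℕ) (hD : 1 ≤ D)
    (l : EuclideanSpace ℝ (Fin D) → ℝ) (hl : Differentiable ℝ l)
    (L : ℝ) (hL : ∀ a b, ‖gradient l a - gradient l b‖ ≤ L * ‖a - b‖)
    (δ : EuclideanSpace ℝ (Fin D)) (ε γ : ℝ) (hε : 0 ≤ ε) (hγ : 0 < γ) :
    (∫ z : Fin D → ℝ,
        l (δ - ε • (WithLp.equiv 2 (Fin D → ℝ)).symm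
          (fun i => Real.sign (gradient l δ i + γ * z i)))
      ∂(Measure.pi fun _ => gaussianReal 0 1)) ≤
      l δ - ε * (∑ i, |gradient l δ i| * (2 * Phi (|gradient l δ i| / γ) - 1))
        + L * D * ε ^ 2 / 2 := by
  set g : EuclideanSpace ℝ (Fin D) := gradient l δ with hg
  set π : Measure (Fin D → ℝ) := Measure.pi fun _ => gaussianReal 0 1 with hπ
  haveI : IsProbabilityMeasure π := by rw [hπ]; infer_instance
  set s : (Fin D → ℝ) → EuclideanSpace ℝ (Fin D) :=
    fun z => (WithLp.equiv 2 (Fin D → ℝ)).symm (fun i => Real.sign (g i + γ * z i)) with hs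
  -- L ≥ 0
  have hL0 : 0 ≤ L := by
    have i0 : Fin D := ⟨0, hD⟩
    have h := hL δ (δ + EuclideanSpace.single i0 (1:ℝ))
    have hn : ‖δ - (δ + EuclideanSpace.single i0 (1:ℝ))‖ = 1 := by
      simp [EuclideanSpace.norm_single]
    rw [hn, mul_one] at h
    exact le_trans (norm_nonneg _) h
  -- sign values bounded
  have hsv : ∀ z i, |s z i| ≤ 1 := by
    intro z i
    rcases Real.sign_apply_eq (g i + γ * z i) with h | h | h <;>
      simp [hs, WithLp.equiv_symm_apply, PiLp.toLp_apply, h]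
  -- norm of sign vector
  have hnorm : ∀ z, ‖s z‖ ^ 2 ≤ (D : ℝ) := by
    intro z
    rw [EuclideanSpace.norm_eq, Real.sq_sqrt (by positivity)]
    calc (∑ i, ‖s z i‖ ^ 2) ≤ ∑ _i : Fin D, (1:ℝ) := by
          apply Finset.sum_le_sum
          intro i _
          have := hsv z i
          rw [Real.norm_eq_abs]
          nlinarith [abs_nonneg (s z i)]
      _ = (D : ℝ) := by simp
  -- inner product formula
  have hinner : ∀ z, (inner ℝ g (s z) : ℝ)
      = ∑ i, g i * Real.sign (g i + γ * z i) := by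
    intro z
    rw [PiLp.inner_apply]
    apply Finset.sum_congr rfl
    intro i _
    simp [hs, WithLp.equiv_symm_apply, PiLp.toLp_apply, RCLike.inner_apply, mul_comm]
  -- pointwise descent bound
  have hpt : ∀ z : Fin D → ℝ, l (δ - ε • s z)
      ≤ l δ - ε * (∑ i, g i * Real.sign (g i + γ * z i)) + L * D * ε ^ 2 / 2 := by
    intro z
    have h0 := descent l hl L hL0 hL δ (-(ε • s z))
    rw [← sub_eq_add_neg] at h0
    have h1 : (inner ℝ g (-(ε • s z)) : ℝ) = -(ε * inner ℝ g (s z)) := by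
      rw [inner_neg_right, real_inner_smul_right]
    have h2 : ‖-(ε • s z)‖ ^ 2 = ε ^ 2 * ‖s z‖ ^ 2 := by
      rw [norm_neg, norm_smul]
      simp [mul_pow, abs_of_nonneg hε]
    have h3 : L / 2 * ‖-(ε • s z)‖ ^ 2 ≤ L * D * ε ^ 2 / 2 := by
      rw [h2]
      nlinarith [mul_le_mul_of_nonneg_left (hnorm z) (by positivity : (0:ℝ) ≤ L * ε ^ 2)]
    rw [← hg] at h0
    rw [h1, hinner z] at h0
    linarith
  -- measurability
  have hmeas_sign : ∀ i : Fin D, Measurable (fun z : Fin D → ℝ => Real.sign (g i + γ * z i)) :=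
    fun i => measurable_rsign.comp (f := fun z : Fin D → ℝ => g i + γ * z i) (by fun_prop)
  have hmeas_s : Measurable s := by
    have h1 : Measurable (fun z : Fin D → ℝ => (fun i => Real.sign (g i + γ * z i))) :=
      measurable_pi_lambda _ hmeas_sign
    exact ((MeasurableEquiv.toLp 2 (Fin D → ℝ)).measurable).comp h1
  have hmeas_F : Measurable (fun z => l (δ - ε • s z)) :=
    hl.continuous.measurable.comp (measurable_const.sub (hmeas_s.const_smul ε))
  -- uniform bound on F
  have hne : (Finset.univ : Finset (Fin D → Fin 3)).Nonempty := Finset.univ_nonempty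
  set pts : (Fin D → Fin 3) → ℝ := fun u =>
    |l (δ - ε • (WithLp.equiv 2 (Fin D → ℝ)).symm (fun i => ((u i : ℕ) : ℝ) - 1))| with hpts
  set M := Finset.univ.sup' hne pts with hM
  have hbd : ∀ z, |l (δ - ε • s z)| ≤ M := by
    intro z
    set u : Fin D → Fin 3 := fun i => if Real.sign (g i + γ * z i) = -1 then 0
      else if Real.sign (g i + γ * z i) = 0 then 1 else 2 with hu
    have heq : s z = (WithLp.equiv 2 (Fin D → ℝ)).symm (fun i => ((u i : ℕ) : ℝ) - 1) := by
      simp only [hs]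
      congr 1
      ext i
      rcases Real.sign_apply_eq (g i + γ * z i) with h | h | h <;>
        · rw [h]
          simp only [hu, h]
          norm_num
    rw [heq]
    exact Finset.le_sup' pts (Finset.mem_univ u)
  have hF_int : Integrable (fun z => l (δ - ε • s z)) π :=
    Integrable.mono' (integrable_const M) hmeas_F.aestronglyMeasurable
      (ae_of_all _ fun z => by simpa [Real.norm_eq_abs] using hbd z)
  -- integrability of sign terms
  have hsint : ∀ i : Fin D, Integrable (fun z : Fin D → ℝ => Real.sign (g i + γ * z i)) π := by
    intro i
    apply Integrable.mono' (integrable_const 1) (hmeas_sign i).aestronglyMeasurable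
    apply ae_of_all
    intro z
    rw [Real.norm_eq_abs]
    rcases Real.sign_apply_eq (g i + γ * z i) with h | h | h <;> simp [h]
  have hS_int : Integrable (fun z => ∑ i, g i * Real.sign (g i + γ * z i)) π :=
    integrable_finset_sum _ (fun i _ => (hsint i).const_mul (g i))
  have hsum_int : ∀ i : Fin D, (∫ z, Real.sign (g i + γ * z i) ∂π) = 2 * Phi (g i / γ) - 1 := by
    intro i
    rw [hπ, eval_integral i (fun t => Real.sign (g i + γ * t)), sign_integral (g i) γ hγ]
  calc (∫ z, l (δ - ε • s z) ∂π)
      ≤ ∫ z, (l δ - ε * (∑ i, g i * Real.sign (g i + γ * z i)) + L * D * ε ^ 2 / 2) ∂π :=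
        integral_mono hF_int
          (((integrable_const _).sub (hS_int.const_mul ε)).add (integrable_const _)) hpt
    _ = l δ - ε * (∑ i, g i * (2 * Phi (g i / γ) - 1)) + L * D * ε ^ 2 / 2 := by
        have hfun : (fun z : Fin D → ℝ =>
              l δ - ε * (∑ i, g i * Real.sign (g i + γ * z i)) + L * ↑D * ε ^ 2 / 2)
            = fun z => (l δ + L * ↑D * ε ^ 2 / 2)
              + (-ε) * (∑ i, g i * Real.sign (g i + γ * z i)) := by
          funext z; ring
        rw [hfun, integral_add (integrable_const _) (hS_int.const_mul (-ε)), integral_const,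
          integral_const_mul, integral_finset_sum _ (fun i _ => (hsint i).const_mul (g i))]
        simp only [probReal_univ, one_smul]
        have h2 : ∀ i ∈ Finset.univ, (∫ z, g i * Real.sign (g i + γ * z i) ∂π)
            = g i * (2 * Phi (g i / γ) - 1) := by
          intro i _
          rw [integral_const_mul, hsum_int i]
        rw [Finset.sum_congr rfl h2]
        ring
    _ = l δ - ε * (∑ i, |g i| * (2 * Phi (|g i| / γ) - 1)) + L * D * ε ^ 2 / 2 := by
        have : ∀ i ∈ Finset.univ, g i * (2 * Phi (g i / γ) - 1)
            = |g i| * (2 * Phi (|g i| / γ) - 1) := fun i _ => abs_form (g i) γ hγ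
        rw [Finset.sum_congr rfl this]
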